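/- Under the high reference point R_p = D(π − c_s), the utility U_RPH(B_s) = −λ·w₁·(B_s·c_s + D·c_l − D·c_s)^β − λ·w₂·(D·(c_l − c_s) − B_s·(c_l − c_s))^β on [0, D] is strictly convex, so its maximum over [0, D] is attained at a boundary point B_s ∈ {0, D}. -/

import Mathlib

lemma aux_strictConvexOn (s : Set ℝ) (hs : Convex ℝ s) (c a b β : ℝ)
    (hc : 0 < c) (ha : a ≠ 0) (hβ : 0 < β) (hβ1 : β < 1)
    (hmap : ∀ x ∈ s, 0 ≤ a * x + b) :
    StrictConvexOn ℝ s (fun x => -(c * (a * x + b) ^ β)) := by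
  refine ⟨hs, fun x hx y hy hxy p q hp hq hpq => ?_⟩
  have h1 : (0:ℝ) ≤ a * x + b := hmap x hx
  have h2 : (0:ℝ) ≤ a * y + b := hmap y hy
  have hne : a * x + b ≠ a * y + b := by
    intro h; apply hxy; have h' : a * (x - y) = 0 := by linarith
    rcases mul_eq_zero.mp h' with h | h; exact absurd h ha; linarith
  have key := (Real.strictConcaveOn_rpow hβ hβ1).2 h1 h2 hne hp hq hpq
  have harg : a * (p • x + q • y) + b = p • (a * x + b) + q • (a * y + b) := by
    simp only [smul_eq_mul]; linear_combination (-b) * hpq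
  simp only [smul_eq_mul] at key harg ⊢
  rw [harg]
  nlinarith [mul_lt_mul_of_pos_left key hc]

theorem high_reference_point_convex_boundary_max
    (D cl cs l β w₁ w₂ : ℝ)
    (hD : 0 < D) (hcs : 0 < cs) (hcscl : cs < cl)
    (hl : 0 < l) (hβ : 0 < β) (hβ1 : β < 1)
    (hw₁ : 0 < w₁) (hw₂ : 0 < w₂)
    (U : ℝ → ℝ)
    (hU : ∀ Bs : ℝ, U Bs =
      -l * w₁ * (Bs * cs + D * cl - D * cs) ^ β
      - l * w₂ * (D * (cl - cs) - Bs * (cl - cs)) ^ β) :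
    StrictConvexOn ℝ (Set.Icc 0 D) U ∧
    (∀ Bs ∈ Set.Icc (0:ℝ) D, U Bs ≤ max (U 0) (U D)) := by
  have h1 := aux_strictConvexOn (Set.Icc 0 D) (convex_Icc 0 D) (l * w₁) cs (D * cl - D * cs) β
    (by positivity) (ne_of_gt hcs) hβ hβ1
    (fun x hx => by nlinarith [hx.1, hx.2])
  have h2 := aux_strictConvexOn (Set.Icc 0 D) (convex_Icc 0 D) (l * w₂) (-(cl - cs))
    (D * (cl - cs)) β (by positivity) (by intro h; nlinarith [neg_eq_zero.mp h]) hβ hβ1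
    (fun x hx => by nlinarith [hx.1, hx.2])
  have hsum := h1.add h2
  have hconv : StrictConvexOn ℝ (Set.Icc 0 D) U := by
    refine hsum.congr fun x hx => ?_
    simp only [Pi.add_apply]
    rw [hU x]
    ring_nf
  exact ⟨hconv, fun Bs hBs => hconv.convexOn.le_max_of_mem_Icc
    (Set.left_mem_Icc.2 hD.le) (Set.right_mem_Icc.2 hD.le) hBs⟩
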